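/- arXiv:1807.02493 — 14 statements merged into one kernel-verified Lean document; each statement's English description precedes it below -/
import Mathlib

section
/- Let d be a derivation of the evolution algebra A(G) of a finite graph G with matrix (d_{ij}) relative to the natural basis, i.e. d(e_i) = sum_k d_{ik} e_k. If i ≠ j and N(i) ∩ N(j) ≠ ∅, then d_{ij} = -d_{ji}. -/
open Finset

theorem der_antisym {V : Type*} [Fintype V] [DecidableEq V]
    (G : SimpleGraph V) [DecidableRel G.Adj]
{K : Type*} [Field K] [CharZero K]
    (hconn : G.Connected) (hcard : 3 ≤ Fintype.card V)
    (d : V → V → K)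
    (h1 : ∀ i j k : V, i ≠ j →
      (if G.Adj j k then (1:K) else 0) * d i j +
      (if G.Adj i k then (1:K) else 0) * d j i = 0)
    (h2 : ∀ i j : V, ∑ k, (if G.Adj i k then (1:K) else 0) * d k j =
      2 * (if G.Adj i j then (1:K) else 0) * d i i)
    {i j : V} (hij : i ≠ j)
    (hN : (G.neighborFinset i ∩ G.neighborFinset j).Nonempty) :
    d i j = - d j i := by
  obtain ⟨k, hk⟩ := hN
  simp only [mem_inter, SimpleGraph.mem_neighborFinset] at hk
  have := h1 i j k hij
  rw [if_pos hk.2, if_pos hk.1] at this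
  linear_combination this
end

section
/- Let d be a derivation of the evolution algebra A(G) of a finite graph G with matrix (d_{ij}). If i ≠ j and there exists a vertex in N(i) that is not in N(j) (i.e. N(i) ∩ N(j)^c ≠ ∅), then d_{ji} = 0. -/
open Finset

theorem der_zero_of_not_subset {V : Type*} [Fintype V] [DecidableEq V]
    (G : SimpleGraph V) [DecidableRel G.Adj]
{K : Type*} [Field K] [CharZero K]
    (hconn : G.Connected) (hcard : 3 ≤ Fintype.card V)
    (d : V → V → K)
    (h1 : ∀ i j k : V, i ≠ j →
      (if G.Adj j k then (1:K) else 0) * d i j +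
      (if G.Adj i k then (1:K) else 0) * d j i = 0)
    (h2 : ∀ i j : V, ∑ k, (if G.Adj i k then (1:K) else 0) * d k j =
      2 * (if G.Adj i j then (1:K) else 0) * d i i)
    {i j : V} (hij : i ≠ j)
    (hN : (G.neighborFinset i \ G.neighborFinset j).Nonempty) :
    d j i = 0 := by
  obtain ⟨k, hk⟩ := hN
  simp only [mem_sdiff, SimpleGraph.mem_neighborFinset] at hk
  have := h1 i j k hij
  simpa [hk.1, hk.2] using this
end

section
/- Let d be a derivation of the evolution algebra A(G) of a finite connected graph G with |V| ≥ 3 and matrix (d_{ij}). Then for every vertex i, d_{ii} = (1/(2·deg(i))) · Σ_{k ∈ N(i)} d_{kk}. -/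
open Finset

theorem der_diag_avg {V : Type*} [Fintype V] [DecidableEq V]
    (G : SimpleGraph V) [DecidableRel G.Adj]
{K : Type*} [Field K] [CharZero K]
    (hconn : G.Connected) (hcard : 3 ≤ Fintype.card V)
    (d : V → V → K)
    (h1 : ∀ i j k : V, i ≠ j →
      (if G.Adj j k then (1:K) else 0) * d i j +
      (if G.Adj i k then (1:K) else 0) * d j i = 0)
    (h2 : ∀ i j : V, ∑ k, (if G.Adj i k then (1:K) else 0) * d k j =
      2 * (if G.Adj i j then (1:K) else 0) * d i i)
    (i : V) :
    d i i = (1 / (2 * (G.degree i : K))) * ∑ k ∈ G.neighborFinset i, d k k := by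
  classical
  -- every vertex has a neighbor
  have hne : ∀ v : V, ∃ w, G.Adj v w := by
    intro v
    obtain ⟨w, hw⟩ : ∃ w : V, w ≠ v := by
      have : 1 < Fintype.card V := by omega
      exact Fintype.exists_ne_of_one_lt_card this v
    obtain ⟨p⟩ := hconn.preconnected v w
    have hnil : ¬ p.Nil := SimpleGraph.Walk.not_nil_of_ne hw.symm
    exact ⟨p.getVert 1, p.adj_snd hnil⟩
  -- skew-symmetry of off-diagonal entries
  have skew : ∀ j k : V, j ≠ k → d k j = - d j k := by
    intro j k hjk
    obtain ⟨m, hm⟩ := hne j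
    have e1 := h1 k j m (Ne.symm hjk)
    rw [if_pos hm, one_mul] at e1
    by_cases hkm : G.Adj k m
    · rw [if_pos hkm, one_mul] at e1
      linear_combination e1
    · rw [if_neg hkm, zero_mul, add_zero] at e1
      obtain ⟨m', hm'⟩ := hne k
      have e2 := h1 j k m' hjk
      rw [if_pos hm', one_mul, e1, mul_zero, add_zero] at e2
      rw [e1, e2, neg_zero]
  -- key: sum over neighbors of i of d k j
  have key : ∀ j : V, ∑ k ∈ G.neighborFinset i, d k j
      = 2 * (if G.Adj i j then (1:K) else 0) * d i i := by
    intro j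
    rw [← h2 i j]
    rw [SimpleGraph.neighborFinset_eq_filter, Finset.sum_filter]
    apply Finset.sum_congr rfl
    intro k _
    by_cases h : G.Adj i k <;> simp [h]
  -- sum key over j ∈ N(i)
  have main : ∑ j ∈ G.neighborFinset i, ∑ k ∈ G.neighborFinset i, d k j
      = 2 * (G.degree i : K) * d i i := by
    rw [Finset.sum_congr rfl (fun j _ => key j)]
    rw [Finset.sum_congr rfl (fun j hj => by
      rw [if_pos ((SimpleGraph.mem_neighborFinset G i j).mp hj)])]
    rw [Finset.sum_const, nsmul_eq_mul, SimpleGraph.degree]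
    ring
  -- split double sum into diagonal and off-diagonal
  set s := G.neighborFinset i with hs
  have split : ∑ j ∈ s, ∑ k ∈ s, d k j
      = (∑ j ∈ s, d j j) + ∑ j ∈ s, ∑ k ∈ s.erase j, d k j := by
    rw [← Finset.sum_add_distrib]
    apply Finset.sum_congr rfl
    intro j hj
    rw [← Finset.add_sum_erase _ _ hj]
  have offdiag : ∑ j ∈ s, ∑ k ∈ s.erase j, d k j = 0 := by
    have hswap : ∑ j ∈ s, ∑ k ∈ s.erase j, d k j
        = ∑ j ∈ s, ∑ k ∈ s.erase j, d j k := by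
      rw [Finset.sum_sigma', Finset.sum_sigma']
      apply Finset.sum_nbij' (fun x => ⟨x.2, x.1⟩) (fun x => ⟨x.2, x.1⟩)
      · rintro ⟨a, b⟩ h
        simp only [Finset.mem_sigma, Finset.mem_erase] at h ⊢
        exact ⟨h.2.2, Ne.symm h.2.1, h.1⟩
      · rintro ⟨a, b⟩ h
        simp only [Finset.mem_sigma, Finset.mem_erase] at h ⊢
        exact ⟨h.2.2, Ne.symm h.2.1, h.1⟩
      · rintro ⟨a, b⟩ _; rfl
      · rintro ⟨a, b⟩ _; rfl
      · rintro ⟨a, b⟩ _; rfl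
    have : 2 * ∑ j ∈ s, ∑ k ∈ s.erase j, d k j = 0 := by
      rw [two_mul]
      nth_rewrite 2 [hswap]
      rw [← Finset.sum_add_distrib]
      apply Finset.sum_eq_zero
      intro j hj
      rw [← Finset.sum_add_distrib]
      apply Finset.sum_eq_zero
      intro k hk
      rw [skew j k (Ne.symm (Finset.ne_of_mem_erase hk))]
      ring
    have h2ne : (2:K) ≠ 0 := two_ne_zero
    exact (mul_eq_zero.mp this).resolve_left h2ne
  have hdeg : 0 < G.degree i := (G.degree_pos_iff_exists_adj i).mpr (hne i)
  have hdegK : (G.degree i : K) ≠ 0 := Nat.cast_ne_zero.mpr hdeg.ne'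
  have final : 2 * (G.degree i : K) * d i i = ∑ k ∈ s, d k k := by
    rw [← main, split, offdiag, add_zero]
  rw [← final]
  field_simp
end

section
/- Let d be a derivation of the evolution algebra A(G) of a finite connected graph G with |V| ≥ 3 and matrix (d_{ij}). If vertices i and j are twins (N(i) = N(j)), then d_{ii} = d_{jj}. -/
open Finset

theorem der_diag_eq_of_twin {V : Type*} [Fintype V] [DecidableEq V]
    (G : SimpleGraph V) [DecidableRel G.Adj]
{K : Type*} [Field K] [CharZero K]
    (hconn : G.Connected) (hcard : 3 ≤ Fintype.card V)
    (d : V → V → K)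
    (h1 : ∀ i j k : V, i ≠ j →
      (if G.Adj j k then (1:K) else 0) * d i j +
      (if G.Adj i k then (1:K) else 0) * d j i = 0)
    (h2 : ∀ i j : V, ∑ k, (if G.Adj i k then (1:K) else 0) * d k j =
      2 * (if G.Adj i j then (1:K) else 0) * d i i)
    {i j : V} (htwin : G.neighborFinset i = G.neighborFinset j) :
    d i i = d j j := by
  have htw : ∀ p : V, G.Adj i p ↔ G.Adj j p := by
    intro p
    rw [← SimpleGraph.mem_neighborFinset, ← SimpleGraph.mem_neighborFinset, htwin]
  have hnt : Nontrivial V := Fintype.one_lt_card_iff_nontrivial.mp (by omega)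
  obtain ⟨x, hx⟩ := exists_ne i
  obtain ⟨w⟩ := hconn i x
  obtain ⟨y, hadj⟩ : ∃ y, G.Adj i y := by
    cases w with
    | nil => exact absurd rfl hx
    | cons h p => exact ⟨_, h⟩
  have key : ∀ p : V, 2 * (if G.Adj i p then (1:K) else 0) * d i i =
      2 * (if G.Adj j p then (1:K) else 0) * d j j := by
    intro p
    rw [← h2 i p, ← h2 j p]
    apply Finset.sum_congr rfl
    intro k _
    congr 1
    simp only [htw k]
  have := key y
  rw [if_pos hadj, if_pos ((htw y).mp hadj)] at this
  have h2p : (2:K) * d i i = 2 * d j j := by linear_combination this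
  exact mul_left_cancel₀ two_ne_zero h2p
end

section
/- Let d be a derivation of the evolution algebra A(G) of a finite connected graph G with |V| ≥ 3, with matrix (d_{ij}). If d_{ij} = d_{ji} = 0 for all pairs of distinct vertices i ≠ j, then also d_{ii} = 0 for every vertex i; that is, d = 0. -/
open Finset

theorem der_zero_of_offdiag_zero {V : Type*} [Fintype V] [DecidableEq V]
    (G : SimpleGraph V) [DecidableRel G.Adj]
{K : Type*} [Field K] [CharZero K]
    (hconn : G.Connected) (hcard : 3 ≤ Fintype.card V)
    (d : V → V → K)
    (h1 : ∀ i j k : V, i ≠ j →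
      (if G.Adj j k then (1:K) else 0) * d i j +
      (if G.Adj i k then (1:K) else 0) * d j i = 0)
    (h2 : ∀ i j : V, ∑ k, (if G.Adj i k then (1:K) else 0) * d k j =
      2 * (if G.Adj i j then (1:K) else 0) * d i i)
    (hoff : ∀ i j : V, i ≠ j → d i j = 0) :
    ∀ i j : V, d i j = 0 := by
  have hnbr : ∀ i : V, ∃ j : V, G.Adj i j := by
    intro i
    obtain ⟨j, hj⟩ := Fintype.exists_ne_of_one_lt_card (by omega) i
    obtain ⟨w⟩ := hconn i j
    cases w with
    | nil => exact absurd rfl hj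
    | cons h p => exact ⟨_, h⟩
  have key : ∀ i j : V, G.Adj i j → d j j = 2 * d i i := by
    intro i j hij
    have := h2 i j
    rw [Finset.sum_eq_single j] at this
    · simpa [hij] using this
    · intro k _ hk
      simp [hoff k j hk]
    · simp
  have hdiag : ∀ i : V, d i i = 0 := by
    intro i
    obtain ⟨j, hij⟩ := hnbr i
    have h1' := key i j hij
    have h2' := key j i hij.symm
    rw [h1'] at h2'
    have h3 : (3:K) * d i i = 0 := by linear_combination -h2'
    have h30 : (3:K) ≠ 0 := by norm_num
    exact (mul_eq_zero.mp h3).resolve_left h30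
  intro i j
  by_cases h : i = j
  · subst h; exact hdiag i
  · exact hoff i j h
end

section
/- Let d be a derivation of the evolution algebra A(G) of a finite connected graph G with |V| ≥ 3, with matrix (d_{ij}). If d_{ij} ≠ 0 for some pair of distinct vertices i ≠ j, then i and j are twins, i.e. N(i) = N(j). -/
open Finset

theorem twin_of_der_ne_zero {V : Type*} [Fintype V] [DecidableEq V]
    (G : SimpleGraph V) [DecidableRel G.Adj]
{K : Type*} [Field K] [CharZero K]
    (hconn : G.Connected) (hcard : 3 ≤ Fintype.card V)
    (d : V → V → K)
    (h1 : ∀ i j k : V, i ≠ j →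
      (if G.Adj j k then (1:K) else 0) * d i j +
      (if G.Adj i k then (1:K) else 0) * d j i = 0)
    (h2 : ∀ i j : V, ∑ k, (if G.Adj i k then (1:K) else 0) * d k j =
      2 * (if G.Adj i j then (1:K) else 0) * d i i)
    {i j : V} (hij : i ≠ j) (hd : d i j ≠ 0) :
    G.neighborFinset i = G.neighborFinset j := by
  -- N(j) ⊆ N(i)
  have hji : ∀ k, G.Adj j k → G.Adj i k := by
    intro k hjk
    by_contra hik
    have := h1 i j k hij
    rw [if_pos hjk, if_neg hik] at this
    simp at this
    exact hd this
  -- j has a neighbor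
  have hnb : ∃ k, G.Adj j k := by
    obtain ⟨k0, hk0⟩ := Fintype.exists_ne_of_one_lt_card (by omega) j
    obtain ⟨w⟩ := hconn j k0
    have hnil : ¬ w.Nil := SimpleGraph.Walk.not_nil_of_ne hk0.symm
    exact ⟨w.getVert 1, w.adj_snd hnil⟩
  obtain ⟨k0, hjk0⟩ := hnb
  have hik0 := hji k0 hjk0
  have key := h1 i j k0 hij
  rw [if_pos hjk0, if_pos hik0] at key
  have hdji : d j i ≠ 0 := by
    intro h
    rw [h] at key
    simp at key
    exact hd key
  have hij' : ∀ k, G.Adj i k → G.Adj j k := by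
    intro k hik
    by_contra hjk
    have := h1 j i k hij.symm
    rw [if_pos hik, if_neg hjk] at this
    simp at this
    exact hdji this
  ext a
  simp only [SimpleGraph.mem_neighborFinset]
  exact ⟨hij' a, hji a⟩
end

section
/- Let G be a finite connected graph with |V| ≥ 3 and let d be a derivation of the evolution algebra A(G) with matrix (d_{ij}). If d_{kℓ} ≠ 0 for some distinct vertices k ≠ ℓ, then there exists a twin class T ⊆ V with |T| ≥ 3 such that k, ℓ ∈ T. -/
open Finset

private lemma exists_adj_of_connected {V : Type*} [Fintype V] [DecidableEq V]
    (G : SimpleGraph V) (hconn : G.Connected) (hcard : 2 ≤ Fintype.card V)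
    (v : V) : ∃ w, G.Adj v w := by
  obtain ⟨w, hw⟩ := Fintype.exists_ne_of_one_lt_card (by omega) v
  obtain ⟨p⟩ := hconn.preconnected v w
  cases p with
  | nil => exact absurd rfl hw
  | cons h p => exact ⟨_, h⟩

theorem twin_class_three_of_der_ne_zero {V : Type*} [Fintype V] [DecidableEq V]
    (G : SimpleGraph V) [DecidableRel G.Adj]
{K : Type*} [Field K] [CharZero K]
    (hconn : G.Connected) (hcard : 3 ≤ Fintype.card V)
    (d : V → V → K)
    (h1 : ∀ i j k : V, i ≠ j →
      (if G.Adj j k then (1:K) else 0) * d i j +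
      (if G.Adj i k then (1:K) else 0) * d j i = 0)
    (h2 : ∀ i j : V, ∑ k, (if G.Adj i k then (1:K) else 0) * d k j =
      2 * (if G.Adj i j then (1:K) else 0) * d i i)
    {k l : V} (hkl : k ≠ l) (hd : d k l ≠ 0) :
    ∃ T : Finset V, (∃ i₀ : V, T =
        Finset.univ.filter fun j => G.neighborFinset j = G.neighborFinset i₀) ∧
      3 ≤ T.card ∧ k ∈ T ∧ l ∈ T := by
  -- every vertex has a neighbor
  have hnb : ∀ v : V, ∃ w, G.Adj v w :=
    exists_adj_of_connected G hconn (by omega)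
  -- key lemma: nonzero off-diagonal entry forces twins & antisymmetry
  have key : ∀ i j : V, i ≠ j → d i j ≠ 0 →
      G.neighborFinset i = G.neighborFinset j ∧ d j i = -d i j := by
    intro i j hij hdij
    have hji : d j i ≠ 0 := by
      intro h0
      obtain ⟨m, hm⟩ := hnb j
      have := h1 i j m hij
      rw [h0, if_pos hm] at this
      simp at this
      exact hdij this
    obtain ⟨m0, hm0⟩ := hnb i
    have e0 := h1 i j m0 hij
    rw [if_pos hm0] at e0
    have hadjm0 : G.Adj j m0 := by
      by_contra hA
      rw [if_neg hA] at e0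
      simp at e0
      exact hji e0
    rw [if_pos hadjm0] at e0
    have hanti : d j i = -d i j := by linear_combination e0
    have hiff : ∀ m : V, G.Adj i m ↔ G.Adj j m := by
      intro m
      have e := h1 i j m hij
      rw [hanti] at e
      constructor
      · intro h
        rw [if_pos h] at e
        by_contra hA
        rw [if_neg hA] at e
        simp at e
        exact hdij e
      · intro h
        rw [if_pos h] at e
        by_contra hA
        rw [if_neg hA] at e
        simp at e
        exact hdij e
    have hN : G.neighborFinset i = G.neighborFinset j := by
      ext m
      simp only [SimpleGraph.mem_neighborFinset]
      exact hiff m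
    exact ⟨hN, hanti⟩
  obtain ⟨hNkl, hanti⟩ := key k l hkl hd
  set T : Finset V :=
    Finset.univ.filter (fun j => G.neighborFinset j = G.neighborFinset k) with hT
  have hmemT : ∀ j, j ∈ T ↔ G.neighborFinset j = G.neighborFinset k := by
    intro j; simp [hT]
  have hkT : k ∈ T := (hmemT k).2 rfl
  have hlT : l ∈ T := (hmemT l).2 hNkl.symm
  refine ⟨T, ⟨k, rfl⟩, ?_, hkT, hlT⟩
  by_contra hcard3
  push_neg at hcard3
  -- then T = {k, l}
  have hsub : ({k, l} : Finset V) ⊆ T := by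
    intro x hx
    rcases Finset.mem_insert.1 hx with h | h
    · exact h ▸ hkT
    · exact (Finset.mem_singleton.1 h) ▸ hlT
  have hTeq : T = ({k, l} : Finset V) := by
    refine (Finset.eq_of_subset_of_card_le hsub ?_).symm
    rw [Finset.card_insert_of_notMem (by simp [hkl]), Finset.card_singleton]
    omega
  -- so for m outside {k,l}, d m k = 0 and d m l = 0
  have hzero : ∀ t m : V, t ∈ T → m ≠ k → m ≠ l → d m t = 0 := by
    intro t m htT hmk hml
    by_contra hdm
    have hmt : m ≠ t := by
      intro h; subst h
      rw [hTeq] at htT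
      rcases Finset.mem_insert.1 htT with h | h
      · exact hmk h
      · exact hml (Finset.mem_singleton.1 h)
    have := (key m t hmt hdm).1
    have hmT : m ∈ T := by
      rw [hmemT]
      rw [this]
      exact (hmemT t).1 htT
    rw [hTeq] at hmT
    rcases Finset.mem_insert.1 hmT with h | h
    · exact hmk h
    · exact hml (Finset.mem_singleton.1 h)
  -- k and l have the same neighbors
  have hiffkl : ∀ m : V, G.Adj k m ↔ G.Adj l m := by
    intro m
    rw [← SimpleGraph.mem_neighborFinset, ← SimpleGraph.mem_neighborFinset, hNkl]
  -- pick a neighbor p of k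
  obtain ⟨p, hpk⟩ := hnb k
  have hlp : G.Adj l p := (hiffkl p).1 hpk
  have hpk' : G.Adj p k := hpk.symm
  have hpl' : G.Adj p l := hlp.symm
  -- Eq1 : d k k - d k l = 2 d p p ; Eq2 : d k l + d l l = 2 d p p
  have hsum : ∀ t : V, t ∈ T →
      (∑ m, (if G.Adj p m then (1:K) else 0) * d m t) = d k t + d l t := by
    intro t htT
    rw [← Finset.sum_subset (Finset.subset_univ ({k, l} : Finset V))
      (fun m _ hm => by
        have hmk : m ≠ k := fun h => hm (by simp [h])
        have hml : m ≠ l := fun h => hm (by simp [h])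
        rw [hzero t m htT hmk hml, mul_zero])]
    rw [Finset.sum_pair hkl, if_pos hpk', if_pos hpl', one_mul, one_mul]
  have eq1 : d k k + d l k = 2 * d p p := by
    have := h2 p k
    rw [hsum k hkT, if_pos hpk'] at this
    linear_combination this
  have eq2 : d k l + d l l = 2 * d p p := by
    have := h2 p l
    rw [hsum l hlT, if_pos hpl'] at this
    linear_combination this
  -- Eq3/Eq4 : d k k = d l l
  have eq34 : d k k = d l l := by
    have e3 := h2 k p
    have e4 := h2 l p
    have hLHS : (∑ m, (if G.Adj k m then (1:K) else 0) * d m p)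
        = ∑ m, (if G.Adj l m then (1:K) else 0) * d m p := by
      apply Finset.sum_congr rfl
      intro m _
      rw [if_congr (hiffkl m) rfl rfl]
    rw [hLHS] at e3
    rw [e4, if_pos hpk.symm.symm, if_pos hlp] at e3
    linear_combination (-1/2 : K) * e3
  rw [hanti] at eq1
  have : d k l = 0 := by
    linear_combination (-1/2 : K) * eq1 + (1/2 : K) * eq2 + (1/2 : K) * eq34
  exact hd this
end

section
/- Let G be a finite connected graph with |V| ≥ 3, let T ⊆ V be a twin class of G, and let d be a derivation of the evolution algebra A(G) with matrix (d_{ij}). Then d_{ik} = d_{ki} = 0 for every i ∈ T and every k ∉ T. -/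
open Finset

theorem der_vanishes_outside_twin_class {V : Type*} [Fintype V] [DecidableEq V]
    (G : SimpleGraph V) [DecidableRel G.Adj]
{K : Type*} [Field K] [CharZero K]
    (hconn : G.Connected) (hcard : 3 ≤ Fintype.card V)
    (d : V → V → K)
    (h1 : ∀ i j k : V, i ≠ j →
      (if G.Adj j k then (1:K) else 0) * d i j +
      (if G.Adj i k then (1:K) else 0) * d j i = 0)
    (h2 : ∀ i j : V, ∑ k, (if G.Adj i k then (1:K) else 0) * d k j =
      2 * (if G.Adj i j then (1:K) else 0) * d i i)
    (i₀ : V) (T : Finset V)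
    (hT : T = Finset.univ.filter fun j => G.neighborFinset j = G.neighborFinset i₀) :
    ∀ i ∈ T, ∀ k ∉ T, d i k = 0 ∧ d k i = 0 := by
  -- every vertex has a neighbor
  have hadj : ∀ v : V, ∃ w, G.Adj v w := by
    intro v
    obtain ⟨w, hw⟩ := Fintype.exists_ne_of_one_lt_card (by omega) v
    obtain ⟨p⟩ := hconn v w
    cases p with
    | nil => exact absurd rfl hw
    | cons h _ => exact ⟨_, h⟩
  subst hT
  intro i hi k hk
  simp only [mem_filter, mem_univ, true_and] at hi hk
  have hne : G.neighborFinset i ≠ G.neighborFinset k := by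
    intro h
    exact hk (h ▸ hi)
  have hik : i ≠ k := fun h => hne (h ▸ rfl)
  have A : ∀ u, G.Adj k u → ¬ G.Adj i u → d i k = 0 := by
    intro u ha hb
    have := h1 i k u hik
    simpa [ha, hb] using this
  have B : ∀ u, G.Adj i u → ¬ G.Adj k u → d k i = 0 := by
    intro u ha hb
    have := h1 i k u hik
    simpa [ha, hb] using this
  have C : ∀ u, G.Adj i u → G.Adj k u → d i k + d k i = 0 := by
    intro u ha hb
    have := h1 i k u hik
    simp only [ha, hb, if_pos, one_mul] at this
    exact this
  obtain ⟨u, hu⟩ : ∃ u, (G.Adj i u ∧ ¬ G.Adj k u) ∨ (G.Adj k u ∧ ¬ G.Adj i u) := by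
    by_contra h
    push_neg at h
    apply hne
    ext x
    simp only [SimpleGraph.mem_neighborFinset]
    have := h x
    tauto
  rcases hu with ⟨hiu, hku⟩ | ⟨hku, hiu⟩
  · have hki : d k i = 0 := B u hiu hku
    obtain ⟨w, hw⟩ := hadj k
    by_cases hiw : G.Adj i w
    · have := C w hiw hw
      rw [hki, add_zero] at this
      exact ⟨this, hki⟩
    · exact ⟨A w hw hiw, hki⟩
  · have hikz : d i k = 0 := A u hku hiu
    obtain ⟨w, hw⟩ := hadj i
    by_cases hkw : G.Adj k w
    · have := C w hw hkw
      rw [hikz, zero_add] at this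
      exact ⟨hikz, this⟩
    · exact ⟨hikz, B w hw hkw⟩
end

section
/- Let G be a finite connected graph with |V| ≥ 3, let T ⊆ V be a twin class of G, and let d be a derivation of the evolution algebra A(G) with matrix (d_{ij}). Then d_{ii} = 0 for every i ∈ T, and d_{ℓℓ} = 0 for every ℓ adjacent to some vertex of T. -/
open Finset

theorem der_diag_zero_on_twin_class {V : Type*} [Fintype V] [DecidableEq V]
    (G : SimpleGraph V) [DecidableRel G.Adj]
{K : Type*} [Field K] [CharZero K]
    (hconn : G.Connected) (hcard : 3 ≤ Fintype.card V)
    (d : V → V → K)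
    (h1 : ∀ i j k : V, i ≠ j →
      (if G.Adj j k then (1:K) else 0) * d i j +
      (if G.Adj i k then (1:K) else 0) * d j i = 0)
    (h2 : ∀ i j : V, ∑ k, (if G.Adj i k then (1:K) else 0) * d k j =
      2 * (if G.Adj i j then (1:K) else 0) * d i i)
    (i₀ : V) (T : Finset V)
    (hT : T = Finset.univ.filter fun j => G.neighborFinset j = G.neighborFinset i₀) :
    (∀ i ∈ T, d i i = 0) ∧ (∀ l : V, (∃ i ∈ T, G.Adj i l) → d l l = 0) := by
  classical
  -- every vertex has a neighbor
  have hnt : Nontrivial V := Fintype.one_lt_card_iff_nontrivial.mp (by omega)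
  have hnbr : ∀ v : V, ∃ w, G.Adj v w := by
    intro v
    obtain ⟨u, hu⟩ := exists_ne v
    obtain ⟨w⟩ := hconn.preconnected v u
    cases w with
    | nil => exact absurd rfl hu
    | cons h p => exact ⟨_, h⟩
  -- off-diagonal entries vanish unless twins
  have lemA : ∀ i j : V, i ≠ j → G.neighborFinset j ≠ G.neighborFinset i → d i j = 0 := by
    intro i j hij hne
    by_cases hsub : G.neighborFinset j ⊆ G.neighborFinset i
    · obtain ⟨k, hki, hkj⟩ := Finset.not_subset.mp
        (fun h => hne (Finset.Subset.antisymm hsub h))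
      have hik : G.Adj i k := (G.mem_neighborFinset _ _).mp hki
      have hjk : ¬ G.Adj j k := fun h => hkj ((G.mem_neighborFinset _ _).mpr h)
      have hji := h1 j i k hij.symm
      rw [if_pos hik, if_neg hjk, one_mul, zero_mul, add_zero] at hji
      obtain ⟨w, hw⟩ := hnbr j
      have hwj : w ∈ G.neighborFinset j := (G.mem_neighborFinset _ _).mpr hw
      have hiw : G.Adj i w := (G.mem_neighborFinset _ _).mp (hsub hwj)
      have h := h1 i j w hij
      rw [if_pos hw, if_pos hiw, one_mul, one_mul, hji, add_zero] at h
      exact h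
    · obtain ⟨k, hkj, hki⟩ := Finset.not_subset.mp hsub
      have hjk : G.Adj j k := (G.mem_neighborFinset _ _).mp hkj
      have hik : ¬ G.Adj i k := fun h => hki ((G.mem_neighborFinset _ _).mpr h)
      have h := h1 i j k hij
      rw [if_pos hjk, if_neg hik, one_mul, zero_mul, add_zero] at h
      exact h
  -- skew symmetry for twins
  have skew : ∀ i j : V, i ≠ j → G.neighborFinset i = G.neighborFinset j →
      d i j + d j i = 0 := by
    intro i j hij heq
    obtain ⟨w, hw⟩ := hnbr j
    have hwj : w ∈ G.neighborFinset j := (G.mem_neighborFinset _ _).mpr hw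
    have hiw : G.Adj i w := (G.mem_neighborFinset _ _).mp (heq ▸ hwj)
    have h := h1 i j w hij
    rw [if_pos hw, if_pos hiw, one_mul, one_mul] at h
    exact h
  set Tc : V → Finset V :=
    fun j => Finset.univ.filter fun k => G.neighborFinset k = G.neighborFinset j with hTc
  have memTc : ∀ j k : V, k ∈ Tc j ↔ G.neighborFinset k = G.neighborFinset j := by
    intro j k; simp [hTc]
  have adjIff : ∀ j k : V, k ∈ Tc j → ∀ x : V, (G.Adj k x ↔ G.Adj j x) := by
    intro j k hk x
    rw [← SimpleGraph.mem_neighborFinset, ← SimpleGraph.mem_neighborFinset,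
      (memTc j k).mp hk]
  -- key identity: sum of diagonal over a twin class
  have lemC : ∀ j l : V, G.Adj j l →
      ∑ i ∈ Tc j, d i i = 2 * ((Tc j).card : K) * d l l := by
    intro j l hjl
    have hlk : ∀ k ∈ Tc j, G.Adj l k := by
      intro k hk
      exact ((adjIff j k hk l).mpr hjl).symm
    have step1 : ∀ i ∈ Tc j, ∑ k ∈ Tc j, d k i = 2 * d l l := by
      intro i hi
      have h := h2 l i
      rw [if_pos (hlk i hi)] at h
      have hsum : ∑ k, (if G.Adj l k then (1:K) else 0) * d k i = ∑ k ∈ Tc j, d k i := by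
        rw [← Finset.sum_subset (Finset.subset_univ (Tc j))
          (by
            intro k _ hkT
            by_cases hA : G.Adj l k
            · rw [if_pos hA, one_mul]
              have hki : k ≠ i := fun h => hkT (h ▸ hi)
              have hne : G.neighborFinset i ≠ G.neighborFinset k := by
                rw [(memTc j i).mp hi]
                intro h
                exact hkT ((memTc j k).mpr h.symm)
              exact lemA k i hki hne
            · rw [if_neg hA, zero_mul])]
        exact Finset.sum_congr rfl fun k hk => by rw [if_pos (hlk k hk), one_mul]
      rw [hsum] at h
      calc ∑ k ∈ Tc j, d k i = 2 * 1 * d l l := h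
        _ = 2 * d l l := by ring
    -- double counting: the full double sum equals the diagonal sum
    have hdiag : ∑ i ∈ Tc j, ∑ k ∈ Tc j, d k i = ∑ i ∈ Tc j, d i i := by
      have hswap : ∑ i ∈ Tc j, ∑ k ∈ Tc j, d k i = ∑ i ∈ Tc j, ∑ k ∈ Tc j, d i k :=
        Finset.sum_comm
      have h2X : (2:K) * (∑ i ∈ Tc j, ∑ k ∈ Tc j, d k i)
          = 2 * ∑ i ∈ Tc j, d i i := by
        have : (∑ i ∈ Tc j, ∑ k ∈ Tc j, d k i) + (∑ i ∈ Tc j, ∑ k ∈ Tc j, d i k)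
            = ∑ i ∈ Tc j, (2 * d i i) := by
          rw [← Finset.sum_add_distrib]
          refine Finset.sum_congr rfl fun i hi => ?_
          rw [← Finset.sum_add_distrib]
          rw [Finset.sum_eq_single_of_mem i hi
            (fun k hk hne => by
              have : G.neighborFinset k = G.neighborFinset i := by
                rw [(memTc j k).mp hk, (memTc j i).mp hi]
              exact skew k i hne this)]
          ring
        rw [two_mul, hswap]
        nth_rewrite 1 [← hswap]
        rw [this, Finset.mul_sum]
      exact mul_left_cancel₀ (two_ne_zero) h2X
    have : ∑ i ∈ Tc j, ∑ k ∈ Tc j, d k i = ((Tc j).card : K) * (2 * d l l) := by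
      rw [Finset.sum_congr rfl step1, Finset.sum_const, nsmul_eq_mul]
    rw [hdiag] at this
    rw [this]; ring
  -- the final linear algebra
  obtain ⟨l₀, hl₀⟩ := hnbr i₀
  have hi₀mem : i₀ ∈ Tc i₀ := (memTc i₀ i₀).mpr rfl
  have hl₀mem : l₀ ∈ Tc l₀ := (memTc l₀ l₀).mpr rfl
  have hm : ((Tc i₀).card : K) ≠ 0 := by
    exact_mod_cast Nat.cast_ne_zero.mpr (Finset.card_ne_zero_of_mem hi₀mem)
  have hn : ((Tc l₀).card : K) ≠ 0 := by
    exact_mod_cast Nat.cast_ne_zero.mpr (Finset.card_ne_zero_of_mem hl₀mem)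
  set m : K := ((Tc i₀).card : K) with hmdef
  set n : K := ((Tc l₀).card : K) with hndef
  set A : K := ∑ i ∈ Tc i₀, d i i with hAdef
  set B : K := ∑ i ∈ Tc l₀, d i i with hBdef
  have hA : ∀ l : V, G.Adj i₀ l → A = 2 * m * d l l := fun l h => lemC i₀ l h
  have hB : ∀ x : V, G.Adj l₀ x → B = 2 * n * d x x := fun x h => lemC l₀ x h
  have e1 : n * A = 2 * m * B := by
    have key : ∀ l ∈ Tc l₀, A = 2 * m * d l l := by
      intro l hl
      exact hA l ((adjIff l₀ l hl i₀).mpr hl₀.symm).symm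
    have : ∑ l ∈ Tc l₀, A = ∑ l ∈ Tc l₀, 2 * m * d l l :=
      Finset.sum_congr rfl key
    rw [Finset.sum_const, nsmul_eq_mul, ← Finset.mul_sum] at this
    rw [hndef, hBdef]; exact this
  have e2 : m * B = 2 * n * A := by
    have key : ∀ i ∈ Tc i₀, B = 2 * n * d i i := by
      intro i hi
      exact hB i ((adjIff i₀ i hi l₀).mpr hl₀).symm
    have : ∑ i ∈ Tc i₀, B = ∑ i ∈ Tc i₀, 2 * n * d i i :=
      Finset.sum_congr rfl key
    rw [Finset.sum_const, nsmul_eq_mul, ← Finset.mul_sum] at this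
    rw [hmdef, hAdef]; exact this
  have h3 : (3:K) * (n * A) = 0 := by linear_combination -e1 - 2 * e2
  have hA0 : A = 0 := by
    have h3' : (3:K) ≠ 0 := by norm_num
    rcases mul_eq_zero.mp h3 with h | h
    · exact absurd h h3'
    · rcases mul_eq_zero.mp h with h | h
      · exact absurd h hn
      · exact h
  have hB0 : B = 0 := by
    have : m * B = 0 := by rw [e2, hA0]; ring
    rcases mul_eq_zero.mp this with h | h
    · exact absurd h hm
    · exact h
  have hTmem : ∀ i, i ∈ T ↔ i ∈ Tc i₀ := by
    intro i; rw [hT, memTc]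
  have h2n : (2:K) * n ≠ 0 := mul_ne_zero two_ne_zero hn
  have h2m : (2:K) * m ≠ 0 := mul_ne_zero two_ne_zero hm
  constructor
  · intro i hi
    have hi' : i ∈ Tc i₀ := (hTmem i).mp hi
    have := hB i ((adjIff i₀ i hi' l₀).mpr hl₀).symm
    rw [hB0] at this
    rcases mul_eq_zero.mp this.symm with h | h
    · exact absurd h h2n
    · exact h
  · intro l ⟨i, hi, hil⟩
    have hi' : i ∈ Tc i₀ := (hTmem i).mp hi
    have hadj : G.Adj i₀ l := (adjIff i₀ i hi' l).mp hil
    have := hA l hadj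
    rw [hA0] at this
    rcases mul_eq_zero.mp this.symm with h | h
    · exact absurd h h2m
    · exact h
end

section
/- Let G be a finite connected graph with |V| ≥ 3 such that every twin class of G has at most two vertices. Then the only derivation of the evolution algebra A(G) is the zero map. -/
open Finset

/-- Multiplication of the evolution algebra `A(G)` of a graph `G`, realized on
coordinates with respect to the natural basis: `e_i · e_i = ∑_{k ∈ N(i)} e_k`
and `e_i · e_j = 0` for `i ≠ j`. -/
def evolMul {V : Type*} [Fintype V] (G : SimpleGraph V) [DecidableRel G.Adj]
    (K : Type*) [Field K] (x y : V → K) : V → K :=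
  fun k => ∑ i, x i * y i * (if G.Adj i k then 1 else 0)

/-- If every twin class of a finite connected graph `G` with at least three
vertices has at most two elements, then the only derivation of `A(G)` is zero. -/
theorem der_eq_zero_of_no_large_twin_class {V : Type*} [Fintype V] [DecidableEq V]
    (G : SimpleGraph V) [DecidableRel G.Adj]
    {K : Type*} [Field K] [CharZero K]
    (hconn : G.Connected) (hcard : 3 ≤ Fintype.card V)
    (htwin : ∀ i : V,
      (Finset.univ.filter fun j => G.neighborFinset j = G.neighborFinset i).card ≤ 2)
    (d : (V → K) →ₗ[K] (V → K))
    (hd : ∀ x y : V → K,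
      d (evolMul G K x y) = evolMul G K (d x) y + evolMul G K x (d y)) :
    d = 0 := by
  classical
  -- basic multiplication lemmas
  have hmulR : ∀ (x : V → K) (j : V),
      evolMul G K x (Pi.single j 1) = fun k => x j * (if G.Adj j k then 1 else 0) := by
    intro x j
    funext k
    simp only [evolMul]
    rw [Finset.sum_eq_single j]
    · simp
    · intro m _ hm
      simp [Pi.single_apply, hm]
    · intro h; exact absurd (Finset.mem_univ j) h
  have hcomm : ∀ x y : V → K, evolMul G K x y = evolMul G K y x := by
    intro x y; funext k
    simp only [evolMul]
    exact Finset.sum_congr rfl fun m _ => by ring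
  have hnbr : ∀ i : V, ∃ j, G.Adj i j := by
    intro i
    have hnt : Nontrivial V := Fintype.one_lt_card_iff_nontrivial.mp (by omega)
    obtain ⟨j, hj⟩ := exists_ne i
    obtain ⟨w⟩ := hconn.preconnected i j
    cases w with
    | nil => exact absurd rfl hj
    | cons h _ => exact ⟨_, h⟩
  -- relation from e_i · e_j = 0 for i ≠ j
  have rel1 : ∀ i j : V, i ≠ j → ∀ k : V,
      d (Pi.single i 1) j * (if G.Adj j k then (1:K) else 0)
        + d (Pi.single j 1) i * (if G.Adj i k then 1 else 0) = 0 := by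
    intro i j hij k
    have h0 : evolMul G K (Pi.single i 1) (Pi.single j 1) = 0 := by
      funext k'
      simp only [evolMul]
      apply Finset.sum_eq_zero
      intro m _
      rcases eq_or_ne m i with rfl | hmi
      · simp [Pi.single_apply, hij]
      · simp [Pi.single_apply, hmi]
    have h := hd (Pi.single i 1) (Pi.single j 1)
    rw [h0, map_zero, hmulR (d (Pi.single i 1)) j,
        hcomm (Pi.single i 1) (d (Pi.single j 1)),
        hmulR (d (Pi.single j 1)) i] at h
    have h2 := congrFun h k
    simp only [Pi.add_apply, Pi.zero_apply] at h2
    exact h2.symm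
  -- indicator of a neighborhood as a sum of basis vectors
  have hchi : ∀ i : V, (fun k => if G.Adj i k then (1:K) else 0)
      = ∑ m ∈ G.neighborFinset i, Pi.single m 1 := by
    intro i
    funext k
    rw [Finset.sum_apply]
    simp only [Pi.single_apply]
    rw [Finset.sum_ite_eq]
    simp [SimpleGraph.mem_neighborFinset]
  -- relation from e_i · e_i = ∑_{k ∈ N(i)} e_k
  have rel2 : ∀ i k : V, (∑ m ∈ G.neighborFinset i, d (Pi.single m 1) k)
      = 2 * d (Pi.single i 1) i * (if G.Adj i k then 1 else 0) := by
    intro i k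
    have hself : evolMul G K (Pi.single i 1) (Pi.single i 1)
        = fun k => if G.Adj i k then (1:K) else 0 := by
      rw [hmulR]; funext k'; simp
    have h := hd (Pi.single i 1) (Pi.single i 1)
    rw [hself, hchi i, map_sum, hmulR (d (Pi.single i 1)) i,
        hcomm (Pi.single i 1) (d (Pi.single i 1)),
        hmulR (d (Pi.single i 1)) i] at h
    have h2 := congrFun h k
    rw [Finset.sum_apply] at h2
    simp only [Pi.add_apply] at h2
    rw [h2]; ring
  -- step A : off-diagonal entries between non-twin vertices vanish
  have stepA : ∀ i j : V, i ≠ j → G.neighborFinset i ≠ G.neighborFinset j →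
      d (Pi.single j 1) i = 0 := by
    intro i j hij hne
    have hex : ∃ k, ¬ (k ∈ G.neighborFinset i ↔ k ∈ G.neighborFinset j) := by
      by_contra h
      push_neg at h
      exact hne (Finset.ext fun k => h k)
    obtain ⟨k, hk⟩ := hex
    by_cases hki : k ∈ G.neighborFinset i
    · have hkj : k ∉ G.neighborFinset j := fun h => hk ⟨fun _ => h, fun _ => hki⟩
      have h1 := rel1 i j hij k
      rw [SimpleGraph.mem_neighborFinset] at hki
      rw [SimpleGraph.mem_neighborFinset] at hkj
      rw [if_pos hki, if_neg hkj] at h1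
      simpa using h1
    · have hkj : k ∈ G.neighborFinset j := by
        by_contra hkj
        exact hk (iff_of_false hki hkj)
      have h1 := rel1 i j hij k
      rw [SimpleGraph.mem_neighborFinset] at hki
      rw [SimpleGraph.mem_neighborFinset] at hkj
      rw [if_pos hkj, if_neg hki] at h1
      have hji : d (Pi.single i 1) j = 0 := by simpa using h1
      obtain ⟨k', hk'⟩ := hnbr i
      have h2 := rel1 i j hij k'
      rw [if_pos hk', hji] at h2
      simpa using h2
  -- step B : antisymmetry for twins
  have stepB : ∀ i j : V, i ≠ j → G.neighborFinset i = G.neighborFinset j →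
      d (Pi.single i 1) j + d (Pi.single j 1) i = 0 := by
    intro i j hij hN
    obtain ⟨k, hik⟩ := hnbr i
    have hjk : G.Adj j k := by
      have : k ∈ G.neighborFinset j := by
        rw [← hN, SimpleGraph.mem_neighborFinset]; exact hik
      rwa [SimpleGraph.mem_neighborFinset] at this
    have h1 := rel1 i j hij k
    rw [if_pos hik, if_pos hjk] at h1
    simpa using h1
  -- step C : row sums over twin classes
  have stepC : ∀ i m : V, G.Adj i m →
      (∑ k ∈ Finset.univ.filter fun k =>
        G.neighborFinset k = G.neighborFinset m, d (Pi.single k 1) m)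
      = 2 * d (Pi.single i 1) i := by
    intro i m him
    have hsub : (Finset.univ.filter fun k =>
        G.neighborFinset k = G.neighborFinset m) ⊆ G.neighborFinset i := by
      intro k hk
      rw [Finset.mem_filter] at hk
      have hi : i ∈ G.neighborFinset k := by
        rw [hk.2, SimpleGraph.mem_neighborFinset]
        exact him.symm
      rw [SimpleGraph.mem_neighborFinset] at hi ⊢
      exact hi.symm
    have hzero : ∀ x ∈ G.neighborFinset i,
        x ∉ (Finset.univ.filter fun k =>
          G.neighborFinset k = G.neighborFinset m) → d (Pi.single x 1) m = 0 := by
      intro x _ hnx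
      rw [Finset.mem_filter, not_and] at hnx
      have hne : G.neighborFinset x ≠ G.neighborFinset m := hnx (Finset.mem_univ x)
      have hxm : m ≠ x := by rintro rfl; exact hne rfl
      exact stepA m x hxm (fun h => hne h.symm)
    rw [Finset.sum_subset hsub hzero]
    have h := rel2 i m
    rw [if_pos him, mul_one] at h
    exact h
  -- twins give vanishing off-diagonal entries too
  have twinzero : ∀ i j : V, i ≠ j → G.neighborFinset i = G.neighborFinset j →
      d (Pi.single j 1) i = 0 := by
    intro i j hij hN
    obtain ⟨k, hik⟩ := hnbr i
    have hjk : G.Adj j k := by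
      have : k ∈ G.neighborFinset j := by
        rw [← hN, SimpleGraph.mem_neighborFinset]; exact hik
      rwa [SimpleGraph.mem_neighborFinset] at this
    have hTi : (Finset.univ.filter fun k =>
        G.neighborFinset k = G.neighborFinset i) = {i, j} := by
      refine (Finset.eq_of_subset_of_card_le ?_ ?_).symm
      · intro x hx
        rw [Finset.mem_insert, Finset.mem_singleton] at hx
        rcases hx with rfl | rfl
        · simp
        · simp [hN]
      · rw [Finset.card_pair hij]; exact htwin i
    have hTj : (Finset.univ.filter fun k =>
        G.neighborFinset k = G.neighborFinset j) = {i, j} := by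
      refine (Finset.eq_of_subset_of_card_le ?_ ?_).symm
      · intro x hx
        rw [Finset.mem_insert, Finset.mem_singleton] at hx
        rcases hx with rfl | rfl
        · simp [hN]
        · simp
      · rw [Finset.card_pair hij]; exact htwin j
    have h1 := stepC k i hik.symm
    have h2 := stepC k j hjk.symm
    rw [hTi, Finset.sum_pair hij] at h1
    rw [hTj, Finset.sum_pair hij] at h2
    have h3 := stepC i k hik
    have h4 := stepC j k hjk
    have h5 := stepB i j hij hN
    have h6 : (4:K) * d (Pi.single j 1) i = 0 := by
      linear_combination 2*h1 - 2*h2 + 2*h5 - h3.symm.trans h4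
    have h7 : (4:K) ≠ 0 := by norm_num
    exact (mul_eq_zero.mp h6).resolve_left h7
  have offdiag : ∀ i j : V, i ≠ j → d (Pi.single j 1) i = 0 := by
    intro i j hij
    by_cases hN : G.neighborFinset i = G.neighborFinset j
    · exact twinzero i j hij hN
    · exact stepA i j hij hN
  -- twin-class row sums reduce to diagonal entries
  have bdiag : ∀ m : V, (∑ k ∈ Finset.univ.filter fun k =>
      G.neighborFinset k = G.neighborFinset m, d (Pi.single k 1) m)
      = d (Pi.single m 1) m := by
    intro m
    refine Finset.sum_eq_single_of_mem m (by simp) ?_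
    intro k _ hkm
    exact offdiag m k (Ne.symm hkm)
  -- diagonal entries vanish
  have diag : ∀ i : V, d (Pi.single i 1) i = 0 := by
    intro i
    obtain ⟨m, him⟩ := hnbr i
    have h1 := stepC i m him
    rw [bdiag m] at h1
    have h2 := stepC m i him.symm
    rw [bdiag i] at h2
    have h3 : (3:K) * d (Pi.single i 1) i = 0 := by
      linear_combination -h2 - 2*h1
    have h4 : (3:K) ≠ 0 := by norm_num
    exact (mul_eq_zero.mp h3).resolve_left h4
  -- conclude d = 0
  have hall : ∀ q : V, d (Pi.single q 1) = 0 := by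
    intro q
    funext p
    rcases eq_or_ne p q with rfl | hpq
    · exact diag p
    · exact offdiag p q hpq
  apply LinearMap.ext
  intro x
  have hx : x = ∑ q, x q • (Pi.single q 1 : V → K) := by
    funext p
    rw [Finset.sum_apply]
    simp [Pi.single_apply]
  conv_lhs => rw [hx]
  rw [map_sum]
  simp [hall]
end

section
/- Let G be a finite connected graph with |V| ≥ 3 and let d be a derivation of the evolution algebra A(G) with matrix (d_{ij}). For every twin class T of G with |T| ≥ 3 and every i ∈ T, one has Σ_{k ∈ T} d_{ki} = 0. -/
open Finset

private lemma aux_antisym {V : Type*} (G : SimpleGraph V) [DecidableRel G.Adj]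
    {K : Type*} [Field K] (d : V → V → K)
    (h1 : ∀ i j k : V, i ≠ j →
      (if G.Adj j k then (1:K) else 0) * d i j +
      (if G.Adj i k then (1:K) else 0) * d j i = 0)
    {s t m : V} (hne : s ≠ t) (hm1 : G.Adj t m) (hm2 : G.Adj s m) :
    d s t + d t s = 0 := by
  have := h1 s t m hne
  simpa [hm1, hm2] using this

private lemma aux_zero {V : Type*} [Fintype V] [DecidableEq V]
    (G : SimpleGraph V) [DecidableRel G.Adj]
    {K : Type*} [Field K] (d : V → V → K)
    (h1 : ∀ i j k : V, i ≠ j →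
      (if G.Adj j k then (1:K) else 0) * d i j +
      (if G.Adj i k then (1:K) else 0) * d j i = 0)
    {k t m : V} (hne : k ≠ t) (hm1 : G.Adj t m) (hm2 : G.Adj k m)
    (hN : G.neighborFinset k ≠ G.neighborFinset t) : d k t = 0 := by
  have hanti := aux_antisym G d h1 hne hm1 hm2
  have hN' : ¬ ∀ a, a ∈ G.neighborFinset k ↔ a ∈ G.neighborFinset t :=
    fun h => hN (Finset.ext h)
  obtain ⟨m1, hm⟩ := not_forall.1 hN'
  by_cases hmk : m1 ∈ G.neighborFinset k
  · have hmt : m1 ∉ G.neighborFinset t := fun h => hm ⟨fun _ => h, fun _ => hmk⟩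
    rw [SimpleGraph.mem_neighborFinset] at hmk
    rw [SimpleGraph.mem_neighborFinset] at hmt
    have := h1 k t m1 hne
    rw [if_neg hmt, if_pos hmk] at this
    have htk : d t k = 0 := by linear_combination this
    linear_combination hanti - htk
  · have hmt : m1 ∈ G.neighborFinset t := by
      by_contra hmt
      exact hm ⟨fun h => absurd h hmk, fun h => absurd h hmt⟩
    rw [SimpleGraph.mem_neighborFinset] at hmt
    rw [SimpleGraph.mem_neighborFinset] at hmk
    have := h1 k t m1 hne
    rw [if_pos hmt, if_neg hmk] at this
    linear_combination this

private lemma aux_key {V : Type*} [Fintype V] [DecidableEq V]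
    (G : SimpleGraph V) [DecidableRel G.Adj]
    {K : Type*} [Field K] (d : V → V → K)
    (h1 : ∀ i j k : V, i ≠ j →
      (if G.Adj j k then (1:K) else 0) * d i j +
      (if G.Adj i k then (1:K) else 0) * d j i = 0)
    (h2 : ∀ i j : V, ∑ k, (if G.Adj i k then (1:K) else 0) * d k j =
      2 * (if G.Adj i j then (1:K) else 0) * d i i)
    {t n : V} (hadj : G.Adj n t) :
    ∑ k ∈ Finset.univ.filter (fun j =>
        G.neighborFinset j = G.neighborFinset t), d k t = 2 * d n n := by
  have h := h2 n t
  rw [if_pos hadj] at h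
  have hsum : ∑ k ∈ Finset.univ.filter (fun j =>
      G.neighborFinset j = G.neighborFinset t), d k t
      = ∑ k, (if G.Adj n k then (1:K) else 0) * d k t := by
    rw [Finset.sum_filter]
    apply Finset.sum_congr rfl
    intro k _
    by_cases hk : G.neighborFinset k = G.neighborFinset t
    · have hnk : G.Adj n k := by
        have : n ∈ G.neighborFinset k := by
          rw [hk, SimpleGraph.mem_neighborFinset]; exact hadj.symm
        rw [SimpleGraph.mem_neighborFinset] at this
        exact this.symm
      simp [hk, hnk]
    · by_cases hnk : G.Adj n k
      · have hkt : k ≠ t := fun h => hk (h ▸ rfl)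
        have : d k t = 0 := aux_zero G d h1 hkt hadj.symm hnk.symm hk
        simp [hk, hnk, this]
      · simp [hk, hnk]
  rw [hsum, h]; ring

private lemma aux_diag {V : Type*} [Fintype V] [DecidableEq V]
    (G : SimpleGraph V) [DecidableRel G.Adj]
    {K : Type*} [Field K] [CharZero K] (d : V → V → K)
    (h2 : ∀ i j : V, ∑ k, (if G.Adj i k then (1:K) else 0) * d k j =
      2 * (if G.Adj i j then (1:K) else 0) * d i i)
    {s t n : V} (hst : G.neighborFinset s = G.neighborFinset t)
    (hadj : G.Adj t n) : d s s = d t t := by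
  have hs := h2 s n
  have ht := h2 t n
  have hsn : G.Adj s n := by
    have : n ∈ G.neighborFinset s := by
      rw [hst, SimpleGraph.mem_neighborFinset]; exact hadj
    rwa [SimpleGraph.mem_neighborFinset] at this
  rw [if_pos hsn] at hs
  rw [if_pos hadj] at ht
  have heq : ∑ k, (if G.Adj s k then (1:K) else 0) * d k n
      = ∑ k, (if G.Adj t k then (1:K) else 0) * d k n := by
    apply Finset.sum_congr rfl
    intro k _
    have : G.Adj s k ↔ G.Adj t k := by
      rw [← SimpleGraph.mem_neighborFinset, ← SimpleGraph.mem_neighborFinset, hst]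
    by_cases h : G.Adj s k
    · rw [if_pos h, if_pos (this.1 h)]
    · rw [if_neg h, if_neg (fun h' => h (this.2 h'))]
  rw [hs, ht] at heq
  have h2ne : (2:K) ≠ 0 := by norm_num
  apply mul_left_cancel₀ h2ne
  linear_combination heq

private lemma aux_avg {V : Type*} [Fintype V] [DecidableEq V]
    (G : SimpleGraph V) [DecidableRel G.Adj]
    {K : Type*} [Field K] [CharZero K] (d : V → V → K)
    (h1 : ∀ i j k : V, i ≠ j →
      (if G.Adj j k then (1:K) else 0) * d i j +
      (if G.Adj i k then (1:K) else 0) * d j i = 0)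
    (h2 : ∀ i j : V, ∑ k, (if G.Adj i k then (1:K) else 0) * d k j =
      2 * (if G.Adj i j then (1:K) else 0) * d i i)
    {t n : V} (hadj : G.Adj n t) : d t t = 2 * d n n := by
  set T := Finset.univ.filter (fun j =>
      G.neighborFinset j = G.neighborFinset t) with hT
  have htT : t ∈ T := by simp [hT]
  have hmemN : ∀ s ∈ T, G.Adj n s := by
    intro s hs
    have hNs : G.neighborFinset s = G.neighborFinset t := (Finset.mem_filter.1 hs).2
    have : n ∈ G.neighborFinset s := by
      rw [hNs, SimpleGraph.mem_neighborFinset]; exact hadj.symm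
    rw [SimpleGraph.mem_neighborFinset] at this
    exact this.symm
  have hS2 : ∀ s ∈ T, ∑ k ∈ T, d k s = 2 * d n n := by
    intro s hs
    have hNs : G.neighborFinset s = G.neighborFinset t := (Finset.mem_filter.1 hs).2
    have := aux_key G d h1 h2 (hmemN s hs)
    rw [hNs] at this
    rwa [← hT] at this
  have hdiag : ∀ s ∈ T, d s s = d t t := by
    intro s hs
    exact aux_diag G d h2 (Finset.mem_filter.1 hs).2 hadj.symm
  -- double sum
  set S := ∑ s ∈ T, ∑ k ∈ T, d k s with hSdef
  have hS : S = (T.card : K) * (2 * d n n) := by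
    rw [hSdef, Finset.sum_congr rfl hS2, Finset.sum_const, nsmul_eq_mul]
  have hpair : ∀ s ∈ T, ∑ k ∈ T, (d k s + d s k) = 2 * d s s := by
    intro s hs
    rw [Finset.sum_eq_single_of_mem s hs]
    · ring
    · intro b hb hbs
      exact aux_antisym G d h1 hbs (hmemN s hs).symm (hmemN b hb).symm
  have h2S : 2 * S = (T.card : K) * (2 * d t t) := by
    have hswap : S = ∑ s ∈ T, ∑ k ∈ T, d s k := by
      rw [hSdef]; exact Finset.sum_comm
    have : 2 * S = ∑ s ∈ T, ∑ k ∈ T, (d k s + d s k) := by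
      rw [two_mul]
      nth_rewrite 2 [hswap]
      rw [hSdef, ← Finset.sum_add_distrib]
      apply Finset.sum_congr rfl
      intro s _
      rw [← Finset.sum_add_distrib]
    rw [this, Finset.sum_congr rfl hpair]
    have : ∑ s ∈ T, 2 * d s s = ∑ s ∈ T, 2 * d t t :=
      Finset.sum_congr rfl (fun s hs => by rw [hdiag s hs])
    rw [this, Finset.sum_const, nsmul_eq_mul]
  have hc : (T.card : K) ≠ 0 :=
    Nat.cast_ne_zero.2 (Finset.card_ne_zero_of_mem htT)
  have : (T.card : K) * (2 * d t t) = (T.card : K) * (2 * (2 * d n n)) := by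
    rw [← h2S, hS]; ring
  have := mul_left_cancel₀ hc this
  have h2ne : (2:K) ≠ 0 := by norm_num
  apply mul_left_cancel₀ h2ne
  linear_combination this

theorem der_twin_class_column_sum {V : Type*} [Fintype V] [DecidableEq V]
    (G : SimpleGraph V) [DecidableRel G.Adj]
{K : Type*} [Field K] [CharZero K]
    (hconn : G.Connected) (hcard : 3 ≤ Fintype.card V)
    (d : V → V → K)
    (h1 : ∀ i j k : V, i ≠ j →
      (if G.Adj j k then (1:K) else 0) * d i j +
      (if G.Adj i k then (1:K) else 0) * d j i = 0)
    (h2 : ∀ i j : V, ∑ k, (if G.Adj i k then (1:K) else 0) * d k j =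
      2 * (if G.Adj i j then (1:K) else 0) * d i i)
    (i : V)
    (h3 : 3 ≤ (Finset.univ.filter fun j =>
        G.neighborFinset j = G.neighborFinset i).card) :
    ∑ k ∈ Finset.univ.filter (fun j =>
        G.neighborFinset j = G.neighborFinset i), d k i = 0 := by
  -- find a neighbor n of i
  obtain ⟨y, hy⟩ : ∃ y : V, y ≠ i :=
    Fintype.exists_ne_of_one_lt_card (by omega) i
  obtain ⟨w⟩ := hconn.preconnected i y
  have hn : ∃ n : V, G.Adj i n := by
    cases w with
    | nil => exact absurd rfl hy
    | cons h p => exact ⟨_, h⟩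
  obtain ⟨n, hin⟩ := hn
  have e1 : d i i = 2 * d n n := aux_avg G d h1 h2 hin.symm
  have e2 : d n n = 2 * d i i := aux_avg G d h1 h2 hin
  have hnn : d n n = 0 := by
    have h3' : (3 : K) * d n n = 0 := by linear_combination -2 * e1 - e2
    have : (3:K) ≠ 0 := by norm_num
    exact (mul_eq_zero.1 h3').resolve_left this
  rw [aux_key G d h1 h2 hin.symm, hnn]; ring
end

section
/- Let G be a finite connected graph with |V| ≥ 3 and let d be a derivation of the evolution algebra A(G) with matrix (d_{ij}). Then the matrix of d is skew-symmetric with zero diagonal, it vanishes on all entries (i,j) where i and j are not twins, and for every twin class T and i ∈ T one has Σ_{k∈T} d_{ki} = 0. In particular d is block-diagonal with skew-symmetric blocks indexed by the twin classes of size at least 3. -/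
open Finset

theorem der_structure {V : Type*} [Fintype V] [DecidableEq V]
    (G : SimpleGraph V) [DecidableRel G.Adj]
{K : Type*} [Field K] [CharZero K]
    (hconn : G.Connected) (hcard : 3 ≤ Fintype.card V)
    (d : V → V → K)
    (h1 : ∀ i j k : V, i ≠ j →
      (if G.Adj j k then (1:K) else 0) * d i j +
      (if G.Adj i k then (1:K) else 0) * d j i = 0)
    (h2 : ∀ i j : V, ∑ k, (if G.Adj i k then (1:K) else 0) * d k j =
      2 * (if G.Adj i j then (1:K) else 0) * d i i)
    : (∀ i : V, d i i = 0) ∧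
      (∀ i j : V, d i j = - d j i) ∧
      (∀ i j : V, G.neighborFinset i ≠ G.neighborFinset j → d i j = 0) ∧
      (∀ i : V, ∑ k ∈ Finset.univ.filter (fun j =>
          G.neighborFinset j = G.neighborFinset i), d k i = 0) := by
  classical
  -- every vertex has a neighbor
  have hnbr : ∀ v : V, ∃ w, G.Adj v w := by
    intro v
    obtain ⟨w, hw⟩ := Fintype.exists_ne_of_one_lt_card (by omega) v
    obtain ⟨p⟩ := hconn.preconnected v w
    cases p with
    | nil => exact absurd rfl hw
    | cons h q => exact ⟨_, h⟩
  -- skew-symmetry off the diagonal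
  have hskew : ∀ i j : V, i ≠ j → d i j = - d j i := by
    intro i j hij
    obtain ⟨k, hjk⟩ := hnbr j
    obtain ⟨l, hil⟩ := hnbr i
    by_cases hik : G.Adj i k
    · have h := h1 i j k hij
      simp only [if_pos hjk, if_pos hik, one_mul] at h
      linear_combination h
    · have hdij : d i j = 0 := by
        have h := h1 i j k hij
        simpa [hjk, hik] using h
      have hdji : d j i = 0 := by
        by_cases hjl : G.Adj j l
        · have h := h1 i j l hij
          simp only [if_pos hjl, if_pos hil, one_mul] at h
          linear_combination h - hdij
        · have h := h1 i j l hij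
          simpa [hjl, hil] using h
      rw [hdij, hdji, neg_zero]
  -- vanishing on non-twin pairs
  have hzero : ∀ i j : V, G.neighborFinset i ≠ G.neighborFinset j → d i j = 0 := by
    intro i j hne
    have hij : i ≠ j := fun h => hne (by rw [h])
    obtain ⟨k, hk⟩ : ∃ k, ¬ (G.Adj i k ↔ G.Adj j k) := by
      by_contra hc
      push_neg at hc
      apply hne
      ext x
      simp only [SimpleGraph.mem_neighborFinset]
      exact hc x
    by_cases hjk : G.Adj j k
    · have hik : ¬ G.Adj i k := fun h => hk ⟨fun _ => hjk, fun _ => h⟩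
      have h := h1 i j k hij
      simpa [hjk, hik] using h
    · have hik : G.Adj i k := by
        by_contra hik
        exact hk ⟨fun h => absurd h hik, fun h => absurd h hjk⟩
      have h := h1 i j k hij
      have hdji : d j i = 0 := by simpa [hjk, hik] using h
      rw [hskew i j hij, hdji, neg_zero]
  -- twin-class column sums
  have hS : ∀ i j : V, G.Adj i j →
      ∑ k ∈ Finset.univ.filter (fun m => G.neighborFinset m = G.neighborFinset j), d k j
        = 2 * d i i := by
    intro i j hadj
    have h := h2 i j
    rw [if_pos hadj, mul_one] at h
    rw [← h, Finset.sum_filter]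
    apply Finset.sum_congr rfl
    intro k _
    by_cases htw : G.neighborFinset k = G.neighborFinset j
    · have hik : G.Adj i k := by
        have hm : i ∈ G.neighborFinset k := by
          rw [htw]; simpa using hadj.symm
        exact ((SimpleGraph.mem_neighborFinset _ _ _).1 hm).symm
      rw [if_pos htw, if_pos hik, one_mul]
    · rw [if_neg htw, hzero k j htw, mul_zero]
  -- diagonal is constant on twin classes
  have hdiageq : ∀ j k : V, G.neighborFinset k = G.neighborFinset j → d k k = d j j := by
    intro j k htw
    obtain ⟨w, hw⟩ := hnbr j
    have hwk : G.Adj k w := by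
      have hm : w ∈ G.neighborFinset k := by
        rw [htw]; simpa using hw
      exact (SimpleGraph.mem_neighborFinset _ _ _).1 hm
    have ha := hS k w hwk
    have hb := hS j w hw
    rw [ha] at hb
    linear_combination hb / 2
  -- trace identity on a twin class
  have htrace : ∀ j : V,
      ∑ k ∈ Finset.univ.filter (fun m => G.neighborFinset m = G.neighborFinset j),
        ∑ m ∈ Finset.univ.filter (fun m => G.neighborFinset m = G.neighborFinset j), d m k
      = ∑ k ∈ Finset.univ.filter (fun m => G.neighborFinset m = G.neighborFinset j),
          d k k := by
    intro j
    set T := Finset.univ.filter (fun m => G.neighborFinset m = G.neighborFinset j) with hT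
    have key : ∀ k ∈ T, ∑ m ∈ T, (d m k + d k m) = 2 * d k k := by
      intro k hk
      have h : ∑ m ∈ T, (d m k + d k m) = d k k + d k k :=
        Finset.sum_eq_single_of_mem k hk
          (fun m _ hmk => by rw [hskew m k hmk]; ring)
      rw [h]; ring
    have h2A : (∑ k ∈ T, ∑ m ∈ T, d m k) + (∑ k ∈ T, ∑ m ∈ T, d k m)
        = ∑ k ∈ T, 2 * d k k := by
      rw [← Finset.sum_add_distrib]
      apply Finset.sum_congr rfl
      intro k hk
      rw [← Finset.sum_add_distrib]
      exact key k hk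
    have hcomm : (∑ k ∈ T, ∑ m ∈ T, d k m) = ∑ k ∈ T, ∑ m ∈ T, d m k :=
      Finset.sum_comm
    rw [hcomm] at h2A
    have h2' : 2 * (∑ k ∈ T, ∑ m ∈ T, d m k) = 2 * ∑ k ∈ T, d k k := by
      rw [← Finset.mul_sum] at h2A
      linear_combination h2A
    exact mul_left_cancel₀ (two_ne_zero) h2'
  -- d j j = 2 d i i for adjacent i j
  have hdz : ∀ i j : V, G.Adj i j → d j j = 2 * d i i := by
    intro i j hadj
    set T := Finset.univ.filter (fun m => G.neighborFinset m = G.neighborFinset j) with hT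
    have hjT : j ∈ T := by simp [hT]
    have hA : ∑ k ∈ T, ∑ m ∈ T, d m k = (T.card : K) * (2 * d i i) := by
      rw [Finset.sum_congr rfl (fun k hk => ?_), Finset.sum_const, nsmul_eq_mul]
      have htwk : G.neighborFinset k = G.neighborFinset j := by
        simpa [hT] using hk
      have hik : G.Adj i k := by
        have hm : i ∈ G.neighborFinset k := by
          rw [htwk]; simpa using hadj.symm
        exact ((SimpleGraph.mem_neighborFinset _ _ _).1 hm).symm
      have hTeq : T = Finset.univ.filter
          (fun m => G.neighborFinset m = G.neighborFinset k) := by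
        rw [hT]
        apply Finset.filter_congr
        intro m _
        rw [htwk]
      rw [hTeq]
      exact hS i k hik
    have hdiag : ∑ k ∈ T, d k k = (T.card : K) * d j j := by
      rw [Finset.sum_congr rfl
        (fun k hk => hdiageq j k (by simpa [hT] using hk)),
        Finset.sum_const, nsmul_eq_mul]
    have hAeq := htrace j
    rw [← hT] at hAeq
    rw [hA, hdiag] at hAeq
    have hcard : (T.card : K) ≠ 0 :=
      Nat.cast_ne_zero.2 (Finset.card_pos.2 ⟨j, hjT⟩).ne'
    exact (mul_left_cancel₀ hcard hAeq).symm
  -- diagonal is zero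
  have hd0 : ∀ i : V, d i i = 0 := by
    intro i
    obtain ⟨w, hw⟩ := hnbr i
    have ha := hdz w i hw.symm
    have hb := hdz i w hw
    linear_combination (-(1/3) : K) * ha - (2/3 : K) * hb
  refine ⟨hd0, ?_, hzero, ?_⟩
  · intro i j
    by_cases hij : i = j
    · subst hij; rw [hd0]; ring
    · exact hskew i j hij
  · intro i
    obtain ⟨w, hw⟩ := hnbr i
    have h := hS w i hw.symm
    rw [h, hd0 w, mul_zero]
end

section
/- For the path graph P_n with n ≥ 3 vertices, every derivation of the evolution algebra A(P_n) is zero. -/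
open Finset

/-- Multiplication of the evolution algebra `A(P_n)` of the path graph on
vertices `0, …, n-1` (with `i` adjacent to `j` iff `|i - j| = 1`). -/
def mulPath (n : ℕ) (K : Type*) [Field K] (x y : Fin n → K) : Fin n → K :=
  fun k => ∑ i, x i * y i *
    (if i.val + 1 = k.val ∨ k.val + 1 = i.val then 1 else 0)

/-- Every derivation of the evolution algebra of the path graph `P_n`,
`n ≥ 3`, is zero. -/
theorem der_path_eq_zero {n : ℕ} (hn : 3 ≤ n) {K : Type*} [Field K] [CharZero K]
    (d : (Fin n → K) →ₗ[K] (Fin n → K))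
    (hd : ∀ x y : Fin n → K,
      d (mulPath n K x y) = mulPath n K (d x) y + mulPath n K x (d y)) :
    d = 0 := by
  set c : Fin n → Fin n → K :=
    fun i k => if i.val + 1 = k.val ∨ k.val + 1 = i.val then 1 else 0 with hc
  set a : Fin n → Fin n → K := fun k j => d (Pi.single j 1) k with ha
  have hsr : ∀ (x : Fin n → K) (j k : Fin n),
      mulPath n K x (Pi.single j 1) k = x j * c j k := by
    intro x j k
    unfold mulPath
    rw [Finset.sum_eq_single j]
    · simp [hc]
    · intro b _ hb
      simp [Pi.single_eq_of_ne hb]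
    · simp
  have hcomm : ∀ x y : Fin n → K, mulPath n K x y = mulPath n K y x := by
    intro x y; funext k; unfold mulPath
    apply Finset.sum_congr rfl; intros; ring
  have hexp : ∀ (v : Fin n → K) (k : Fin n), d v k = ∑ m, v m * a k m := by
    intro v k
    have hv : v = ∑ m, v m • (Pi.single m (1:K) : Fin n → K) := by
      funext j
      rw [Finset.sum_apply]
      simp [Pi.single_apply, eq_comm]
    conv_lhs => rw [hv]
    rw [map_sum, Finset.sum_apply]
    simp [ha]
  have hA : ∀ i j k : Fin n, i ≠ j → a j i * c j k + a i j * c i k = 0 := by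
    intro i j k hij
    have h0 : mulPath n K (Pi.single i (1:K)) (Pi.single j 1) = 0 := by
      funext k'
      rw [hsr]
      simp [Pi.single_eq_of_ne (Ne.symm hij)]
    have h := hd (Pi.single i 1) (Pi.single j 1)
    rw [h0, map_zero] at h
    have hk := congrFun h.symm k
    rw [Pi.add_apply, hsr, hcomm, hsr] at hk
    simpa [ha] using hk
  have hB : ∀ i k : Fin n, (∑ m, c i m * a k m) = 2 * (a i i * c i k) := by
    intro i k
    have h1 : mulPath n K (Pi.single i (1:K)) (Pi.single i 1) = fun k' => c i k' := by
      funext k'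
      rw [hsr]
      simp
    have h := hd (Pi.single i 1) (Pi.single i 1)
    rw [h1] at h
    have hk := congrFun h k
    rw [hexp, Pi.add_apply, hsr, hcomm, hsr] at hk
    rw [hk]; ring
  have sumC : ∀ (i : Fin n) (f : Fin n → K),
      (∑ m, c i m * f m) =
        (if h : i.val + 1 < n then f ⟨i.val + 1, h⟩ else 0) +
        (if h : 0 < i.val then f ⟨i.val - 1, lt_of_le_of_lt (Nat.sub_le _ _) i.isLt⟩ else 0) := by
    intro i f
    have hsplit : ∀ m : Fin n, c i m * f m =
        (if i.val + 1 = m.val then f m else 0) + (if m.val + 1 = i.val then f m else 0) := by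
      intro m
      by_cases h1 : i.val + 1 = m.val <;> by_cases h2 : m.val + 1 = i.val
      · omega
      all_goals simp [hc, h1, h2]
    rw [Finset.sum_congr rfl (fun m _ => hsplit m), Finset.sum_add_distrib]
    congr 1
    · by_cases h : i.val + 1 < n
      · rw [dif_pos h, Finset.sum_eq_single (⟨i.val + 1, h⟩ : Fin n)]
        · rw [if_pos rfl]
        · intro b _ hb
          rw [if_neg]
          intro hcon
          exact hb (Fin.ext hcon.symm)
        · simp
      · rw [dif_neg h]
        apply Finset.sum_eq_zero
        intro m _
        rw [if_neg]
        have := m.isLt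
        omega
    · by_cases h : 0 < i.val
      · rw [dif_pos h, Finset.sum_eq_single
            (⟨i.val - 1, lt_of_le_of_lt (Nat.sub_le _ _) i.isLt⟩ : Fin n)]
        · rw [if_pos (by simp; omega)]
        · intro b _ hb
          rw [if_neg]
          intro hcon
          apply hb
          apply Fin.ext
          simp
          omega
        · simp
      · rw [dif_neg h]
        apply Finset.sum_eq_zero
        intro m _
        rw [if_neg]
        omega
  have hB2 : ∀ i k : Fin n,
      (if h : i.val + 1 < n then a k ⟨i.val + 1, h⟩ else 0) +
      (if h : 0 < i.val then a k ⟨i.val - 1, lt_of_le_of_lt (Nat.sub_le _ _) i.isLt⟩ else 0)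
        = 2 * (a i i * c i k) := by
    intro i k
    rw [← sumC]
    exact hB i k
  -- if i is adjacent to k and j is not, then a i j = 0
  have offStep : ∀ i j k : Fin n, i ≠ j →
      (i.val + 1 = k.val ∨ k.val + 1 = i.val) →
      ¬(j.val + 1 = k.val ∨ k.val + 1 = j.val) → a i j = 0 := by
    intro i j k hij hik hjk
    have h := hA j i k (Ne.symm hij)
    rw [show c i k = 1 from if_pos hik, show c j k = 0 from if_neg hjk] at h
    simpa using h
  have S1 : ∀ i j : Fin n, i.val + 1 = j.val → a i j = 0 ∧ a j i = 0 := by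
    intro i j hij
    have hne : i ≠ j := by
      intro h; rw [h] at hij; omega
    constructor
    · exact offStep i j j hne (Or.inl hij) (by omega)
    · exact offStep j i i (Ne.symm hne) (Or.inr hij) (by omega)
  have Off2 : ∀ i j : Fin n, i.val + 2 ≤ j.val →
      ¬(i.val = n - 3 ∧ j.val = n - 1) → a i j = 0 ∧ a j i = 0 := by
    intro i j hij htw
    have hne : i ≠ j := by
      intro h; rw [h] at hij; omega
    have hji : a j i = 0 := by
      by_cases h : j.val + 1 < n
      · exact offStep j i ⟨j.val + 1, h⟩ (Ne.symm hne) (Or.inl rfl) (by simp; omega)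
      · have hj : j.val = n - 1 := by have := j.isLt; omega
        apply offStep j i ⟨j.val - 1, lt_of_le_of_lt (Nat.sub_le _ _) j.isLt⟩ (Ne.symm hne)
        · right; simp; omega
        · simp
          constructor
          · intro hcon; exact htw ⟨by omega, hj⟩
          · omega
      -- done a j i
    refine ⟨?_, hji⟩
    by_cases h : 0 < i.val
    · apply offStep i j ⟨i.val - 1, lt_of_le_of_lt (Nat.sub_le _ _) i.isLt⟩ hne
      · right; simp; omega
      · simp; omega
    · -- i.val = 0
      have hi0 : i.val = 0 := by omega
      have h1n : (1 : ℕ) < n := by omega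
      by_cases hj2 : j.val = 2
      · -- use hA at k = 1 together with hji
        have h := hA j i ⟨1, h1n⟩ (Ne.symm hne)
        rw [hji] at h
        rw [show c i ⟨1, h1n⟩ = 1 from if_pos (by simp; omega)] at h
        simpa using h
      · exact offStep i j ⟨1, h1n⟩ hne (Or.inl (by simp; omega)) (by simp; omega)
  have hn1 : n - 1 < n := by omega
  have hn2 : n - 2 < n := by omega
  have hn3 : n - 3 < n := by omega
  have Cval : ∀ (x y : Fin n), (x.val + 1 = y.val ∨ y.val + 1 = x.val) → c x y = 1 :=
    fun x y h => if_pos h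
  -- twin relation
  have tw : a ⟨n-1,hn1⟩ ⟨n-3,hn3⟩ + a ⟨n-3,hn3⟩ ⟨n-1,hn1⟩ = 0 := by
    have h := hA ⟨n-3,hn3⟩ ⟨n-1,hn1⟩ ⟨n-2,hn2⟩
      (by intro hcon; rw [Fin.mk.injEq] at hcon; omega)
    rw [Cval ⟨n-1,hn1⟩ ⟨n-2,hn2⟩ (Or.inr (show n-2+1 = n-1 by omega)),
        Cval ⟨n-3,hn3⟩ ⟨n-2,hn2⟩ (Or.inl (show n-3+1 = n-2 by omega)),
        mul_one, mul_one] at h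
    exact h
  have r1 : a ⟨n-2,hn2⟩ ⟨n-2,hn2⟩ = 2 * (a ⟨n-1,hn1⟩ ⟨n-1,hn1⟩ * 1) := by
    have h := hB2 ⟨n-1,hn1⟩ ⟨n-2,hn2⟩
    rw [dif_neg (show ¬((⟨n-1,hn1⟩:Fin n).val + 1 < n) by show ¬(n-1+1 < n); omega),
        dif_pos (show 0 < (⟨n-1,hn1⟩:Fin n).val by show 0 < n-1; omega),
        Cval ⟨n-1,hn1⟩ ⟨n-2,hn2⟩ (Or.inr (show n-2+1 = n-1 by omega)), zero_add] at h
    exact h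
  have r2 : a ⟨n-1,hn1⟩ ⟨n-1,hn1⟩ + a ⟨n-1,hn1⟩ ⟨n-3,hn3⟩
      = 2 * (a ⟨n-2,hn2⟩ ⟨n-2,hn2⟩ * 1) := by
    have h := hB2 ⟨n-2,hn2⟩ ⟨n-1,hn1⟩
    rw [dif_pos (show (⟨n-2,hn2⟩:Fin n).val + 1 < n by show n-2+1 < n; omega),
        dif_pos (show 0 < (⟨n-2,hn2⟩:Fin n).val by show 0 < n-2; omega),
        Cval ⟨n-2,hn2⟩ ⟨n-1,hn1⟩ (Or.inl (show n-2+1 = n-1 by omega))] at h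
    simp only [show n-2+1 = n-1 from by omega] at h
    exact h
  have r3 : a ⟨n-3,hn3⟩ ⟨n-1,hn1⟩ + a ⟨n-3,hn3⟩ ⟨n-3,hn3⟩
      = 2 * (a ⟨n-2,hn2⟩ ⟨n-2,hn2⟩ * 1) := by
    have h := hB2 ⟨n-2,hn2⟩ ⟨n-3,hn3⟩
    rw [dif_pos (show (⟨n-2,hn2⟩:Fin n).val + 1 < n by show n-2+1 < n; omega),
        dif_pos (show 0 < (⟨n-2,hn2⟩:Fin n).val by show 0 < n-2; omega),
        Cval ⟨n-2,hn2⟩ ⟨n-3,hn3⟩ (Or.inr (show n-3+1 = n-2 by omega))] at h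
    simp only [show n-2+1 = n-1 from by omega] at h
    exact h
  have r4 : a ⟨n-2,hn2⟩ ⟨n-2,hn2⟩ = 2 * (a ⟨n-3,hn3⟩ ⟨n-3,hn3⟩ * 1) := by
    have h := hB2 ⟨n-3,hn3⟩ ⟨n-2,hn2⟩
    rw [dif_pos (show (⟨n-3,hn3⟩:Fin n).val + 1 < n by show n-3+1 < n; omega),
        Cval ⟨n-3,hn3⟩ ⟨n-2,hn2⟩ (Or.inl (show n-3+1 = n-2 by omega))] at h
    simp only [show n-3+1 = n-2 from by omega] at h
    by_cases h4 : 4 ≤ n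
    · rw [dif_pos (show 0 < (⟨n-3,hn3⟩:Fin n).val by show 0 < n-3; omega)] at h
      have hz : a ⟨n-2,hn2⟩
          ⟨(⟨n-3,hn3⟩:Fin n).val - 1,
            lt_of_le_of_lt (Nat.sub_le _ _) (⟨n-3,hn3⟩:Fin n).isLt⟩ = 0 := by
        exact (Off2 ⟨n-3-1, by omega⟩ ⟨n-2,hn2⟩ (by show n-3-1+2 ≤ n-2; omega)
          (by intro hcon; have h1 := hcon.1; simp at h1; omega)).2
      rw [hz, add_zero] at h
      exact h
    · rw [dif_neg (show ¬(0 < (⟨n-3,hn3⟩:Fin n).val) by show ¬(0 < n-3); omega),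
        add_zero] at h
      exact h
  have h12 : (12 : K) * a ⟨n-1,hn1⟩ ⟨n-1,hn1⟩ = 0 := by
    linear_combination (-7) * r1 + (-2) * r2 + (-2) * r3 + 2 * tw + (-1) * r4
  have hA0 : a ⟨n-1,hn1⟩ ⟨n-1,hn1⟩ = 0 :=
    (mul_eq_zero.mp h12).resolve_left (by norm_num)
  have ht : a ⟨n-1,hn1⟩ ⟨n-3,hn3⟩ = 0 := by
    linear_combination r2 + 2 * r1 + 3 * hA0
  have hs : a ⟨n-3,hn3⟩ ⟨n-1,hn1⟩ = 0 := by
    linear_combination tw - ht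
  have hoff : ∀ p q : Fin n, p ≠ q → a p q = 0 := by
    intro p q hpq
    rcases lt_trichotomy p.val q.val with h | h | h
    · by_cases hadj : p.val + 1 = q.val
      · exact (S1 p q hadj).1
      · by_cases htw : p.val = n-3 ∧ q.val = n-1
        · rw [show p = ⟨n-3,hn3⟩ from Fin.ext htw.1, show q = ⟨n-1,hn1⟩ from Fin.ext htw.2]
          exact hs
        · exact (Off2 p q (by omega) htw).1
    · exact absurd (Fin.ext h) hpq
    · by_cases hadj : q.val + 1 = p.val
      · exact (S1 q p hadj).2
      · by_cases htw : q.val = n-3 ∧ p.val = n-1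
        · rw [show p = ⟨n-1,hn1⟩ from Fin.ext htw.2, show q = ⟨n-3,hn3⟩ from Fin.ext htw.1]
          exact ht
        · exact (Off2 q p (by omega) htw).2
  have hdg : ∀ i k : Fin n, (i.val + 1 = k.val ∨ k.val + 1 = i.val) →
      a k k = 2 * a i i := by
    intro i k hik
    have h := hB2 i k
    rw [Cval i k hik, mul_one] at h
    have hkn := k.isLt
    rcases hik with h1 | h1
    · rw [dif_pos (show i.val + 1 < n by omega)] at h
      rw [show (⟨i.val + 1, show i.val + 1 < n by omega⟩ : Fin n) = k from Fin.ext h1] at h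
      by_cases h2 : 0 < i.val
      · rw [dif_pos h2] at h
        have hz : a k ⟨i.val - 1, lt_of_le_of_lt (Nat.sub_le _ _) i.isLt⟩ = 0 := by
          apply hoff
          intro hcon
          have := congrArg Fin.val hcon
          simp at this
          omega
        rw [hz, add_zero] at h
        exact h
      · rw [dif_neg h2, add_zero] at h
        exact h
    · rw [dif_pos (show 0 < i.val by omega)] at h
      rw [show (⟨i.val - 1, lt_of_le_of_lt (Nat.sub_le _ _) i.isLt⟩ : Fin n) = k from
        Fin.ext (by simp; omega)] at h
      by_cases h2 : i.val + 1 < n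
      · rw [dif_pos h2] at h
        have hz : a k ⟨i.val + 1, h2⟩ = 0 := by
          apply hoff
          intro hcon
          have := congrArg Fin.val hcon
          simp at this
          omega
        rw [hz, zero_add] at h
        exact h
      · rw [dif_neg h2, zero_add] at h
        exact h
  have hdiag : ∀ i : Fin n, a i i = 0 := by
    intro i
    obtain ⟨k, hk⟩ : ∃ k : Fin n, (i.val + 1 = k.val ∨ k.val + 1 = i.val) := by
      by_cases h : i.val + 1 < n
      · exact ⟨⟨i.val + 1, h⟩, Or.inl rfl⟩
      · refine ⟨⟨i.val - 1, lt_of_le_of_lt (Nat.sub_le _ _) i.isLt⟩, Or.inr ?_⟩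
        show i.val - 1 + 1 = i.val
        have := i.isLt
        omega
    have e1 := hdg i k hk
    have e2 := hdg k i (Or.symm hk)
    have h3 : (3 : K) * a i i = 0 := by
      linear_combination (-2) * e1 - e2
    exact (mul_eq_zero.mp h3).resolve_left (by norm_num)
  have hall : ∀ k m : Fin n, a k m = 0 := by
    intro k m
    by_cases h : k = m
    · rw [h]; exact hdiag m
    · exact hoff k m h
  apply LinearMap.ext
  intro v
  funext k
  rw [hexp]
  simp [hall]
end

section
/- Let G be a finite connected graph with |V| ≥ 3 whose derivation matrices are constrained as follows: if d is a derivation of A(G) with matrix (d_{ij}) and d_{ij} = 0 whenever i and j lie in a common twin class of size ≥ 3, then d = 0. -/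
open Finset

theorem der_zero_of_twin_entries_zero {V : Type*} [Fintype V] [DecidableEq V]
    (G : SimpleGraph V) [DecidableRel G.Adj]
{K : Type*} [Field K] [CharZero K]
    (hconn : G.Connected) (hcard : 3 ≤ Fintype.card V)
    (d : V → V → K)
    (h1 : ∀ i j k : V, i ≠ j →
      (if G.Adj j k then (1:K) else 0) * d i j +
      (if G.Adj i k then (1:K) else 0) * d j i = 0)
    (h2 : ∀ i j : V, ∑ k, (if G.Adj i k then (1:K) else 0) * d k j =
      2 * (if G.Adj i j then (1:K) else 0) * d i i)
    (hz : ∀ i j : V, G.neighborFinset i = G.neighborFinset j →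
      3 ≤ (Finset.univ.filter fun k =>
        G.neighborFinset k = G.neighborFinset i).card → d i j = 0) :
    ∀ i j : V, d i j = 0 := by
  classical
  -- every vertex has a neighbor
  have hnbr : ∀ v : V, ∃ w, G.Adj v w := by
    intro v
    obtain ⟨w, hw⟩ := Fintype.exists_ne_of_one_lt_card (by omega) v
    obtain ⟨p⟩ := hconn.preconnected v w
    cases p with
    | nil => exact absurd rfl hw
    | cons h _ => exact ⟨_, h⟩
  -- non-twin off-diagonal entries vanish
  have hA : ∀ i j : V, i ≠ j → G.neighborFinset i ≠ G.neighborFinset j →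
      d i j = 0 := by
    intro i j hij hN
    by_cases hk : ∃ k, G.Adj j k ∧ ¬ G.Adj i k
    · obtain ⟨k, hjk, hik⟩ := hk
      have := h1 i j k hij
      simpa [hjk, hik] using this
    · push_neg at hk
      have hex : ∃ k, G.Adj i k ∧ ¬ G.Adj j k := by
        by_contra hc
        push_neg at hc
        apply hN
        ext k
        simp only [SimpleGraph.mem_neighborFinset]
        exact ⟨fun h => hc k h, fun h => hk k h⟩
      obtain ⟨k, hik, hjk⟩ := hex
      have hji : d j i = 0 := by
        have := h1 j i k hij.symm
        simpa [hik, hjk] using this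
      obtain ⟨k0, hjk0⟩ := hnbr j
      have hik0 : G.Adj i k0 := hk k0 hjk0
      have := h1 i j k0 hij
      simp only [if_pos hjk0, if_pos hik0, one_mul, hji, add_zero] at this
      exact this
  -- twin antisymmetry
  have hB : ∀ i j : V, i ≠ j → G.neighborFinset i = G.neighborFinset j →
      d i j = - d j i := by
    intro i j hij hN
    obtain ⟨k0, hjk0⟩ := hnbr j
    have hik0 : G.Adj i k0 := by
      have : k0 ∈ G.neighborFinset j := by
        simpa [SimpleGraph.mem_neighborFinset] using hjk0
      rw [← hN] at this
      simpa [SimpleGraph.mem_neighborFinset] using this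
    have := h1 i j k0 hij
    rw [if_pos hjk0, if_pos hik0] at this
    linear_combination this
  -- key sum identity
  have hS : ∀ i j : V, G.Adj i j →
      (∑ k ∈ Finset.univ.filter
        (fun k => G.neighborFinset k = G.neighborFinset j), d k j)
      = 2 * d i i := by
    intro i j hij
    have h := h2 i j
    rw [if_pos hij] at h
    have hsplit := Finset.sum_filter_add_sum_filter_not Finset.univ
      (fun k => G.neighborFinset k = G.neighborFinset j)
      (fun k => (if G.Adj i k then (1:K) else 0) * d k j)
    have e1 : ∑ k ∈ Finset.univ.filter
        (fun k => G.neighborFinset k = G.neighborFinset j),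
        (if G.Adj i k then (1:K) else 0) * d k j
        = ∑ k ∈ Finset.univ.filter
        (fun k => G.neighborFinset k = G.neighborFinset j), d k j := by
      apply Finset.sum_congr rfl
      intro k hk
      have hkN : G.neighborFinset k = G.neighborFinset j := by
        simpa using hk
      have hikadj : G.Adj i k := by
        have : i ∈ G.neighborFinset j := by
          simpa [SimpleGraph.mem_neighborFinset] using hij.symm
        rw [← hkN] at this
        have : G.Adj k i := by
          simpa [SimpleGraph.mem_neighborFinset] using this
        exact this.symm
      rw [if_pos hikadj, one_mul]
    have e2 : ∑ k ∈ Finset.univ.filter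
        (fun k => ¬ G.neighborFinset k = G.neighborFinset j),
        (if G.Adj i k then (1:K) else 0) * d k j = 0 := by
      apply Finset.sum_eq_zero
      intro k hk
      have hkN : G.neighborFinset k ≠ G.neighborFinset j := by
        simpa using hk
      have hkj : k ≠ j := by
        intro h'; exact hkN (by rw [h'])
      rw [hA k j hkj hkN, mul_zero]
    rw [e1, e2, add_zero] at hsplit
    rw [← hsplit] at h
    rw [h]; ring
  -- twin off-diagonal entries vanish
  have hE : ∀ i j : V, i ≠ j → G.neighborFinset i = G.neighborFinset j →
      d i j = 0 := by
    intro i j hij hN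
    by_cases h3 : 3 ≤ (Finset.univ.filter fun k =>
        G.neighborFinset k = G.neighborFinset i).card
    · exact hz i j hN h3
    · have hiC : i ∈ Finset.univ.filter (fun k =>
          G.neighborFinset k = G.neighborFinset i) := by simp
      have hjC : j ∈ Finset.univ.filter (fun k =>
          G.neighborFinset k = G.neighborFinset i) := by simp [hN]
      have hsub : ({i, j} : Finset V) ⊆ Finset.univ.filter (fun k =>
          G.neighborFinset k = G.neighborFinset i) := by
        intro x hx
        rcases Finset.mem_insert.mp hx with h' | h'
        · rwa [h']
        · rw [Finset.mem_singleton.mp h']; exact hjC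
      have hC : (Finset.univ.filter fun k =>
          G.neighborFinset k = G.neighborFinset i) = {i, j} := by
        refine (Finset.eq_of_subset_of_card_le hsub ?_).symm
        rw [Finset.card_pair hij]
        omega
      obtain ⟨m, him⟩ := hnbr i
      have hjm : G.Adj j m := by
        have : m ∈ G.neighborFinset i := by
          simpa [SimpleGraph.mem_neighborFinset] using him
        rw [hN] at this
        simpa [SimpleGraph.mem_neighborFinset] using this
      -- equal diagonals
      have hdd : d i i = d j j := by
        have e1 := hS i m him
        have e2 := hS j m hjm
        rw [e1] at e2
        exact mul_left_cancel₀ two_ne_zero e2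
      have s1 := hS m i him.symm
      have s2 := hS m j hjm.symm
      have hfe : (Finset.univ.filter fun k =>
          G.neighborFinset k = G.neighborFinset j)
          = (Finset.univ.filter fun k =>
          G.neighborFinset k = G.neighborFinset i) := by rw [hN]
      rw [hfe] at s2
      rw [hC, Finset.sum_pair hij] at s1 s2
      have hanti := hB i j hij hN
      have h2z : (2:K) * d i j = 0 := by
        linear_combination hanti - s1 + s2 + hdd
      exact (mul_eq_zero.mp h2z).resolve_left two_ne_zero
  -- diagonal sum collapses
  have hF : ∀ u : V, (∑ k ∈ Finset.univ.filter
      (fun k => G.neighborFinset k = G.neighborFinset u), d k u) = d u u := by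
    intro u
    rw [Finset.sum_eq_single u]
    · intro k hk hku
      exact hE k u hku (by simpa using hk)
    · intro h; exact absurd (by simp : u ∈ _) h
  -- diagonal entries vanish
  have hDiag : ∀ v : V, d v v = 0 := by
    intro v
    obtain ⟨w, hvw⟩ := hnbr v
    have e1 := hS v w hvw
    have e2 := hS w v hvw.symm
    rw [hF] at e1 e2
    have h3 : (3:K) * d v v = 0 := by linear_combination (-1 : K) * e2 - 2 * e1
    have h3ne : (3:K) ≠ 0 := by norm_num
    exact (mul_eq_zero.mp h3).resolve_left h3ne
  intro i j
  by_cases hij : i = j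
  · rw [hij]; exact hDiag j
  · by_cases hN : G.neighborFinset i = G.neighborFinset j
    · exact hE i j hij hN
    · exact hA i j hij hN
end
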